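/- Let G = (V, E) be a connected non-complete finite simple graph with so(G) = m > 0, and let P be a probability distribution on a product space indexed by V, perfectly Markov with respect to G: for all disjoint A, B, S with A, B nonempty and S nonempty, S separates A and B in G if and only if X_A ⊥⊥ X_B | X_S. Define the graph G_m = (V, E_m) by: α ≁_{G_m} β iff there exists S ⊆ V \ {α, β} with |S| = m and X_α ⊥⊥ X_β | X_S. Then G_m = G. -/

import Mathlib

/-- `S` is a separator of `a` and `b` in `G`: it avoids `a,b` and meets every walk. -/
def SimpleGraph.IsSep {V : Type*} (G : SimpleGraph V) (a b : V) (S : Set V) : Prop :=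
  a ∉ S ∧ b ∉ S ∧ ∀ p : G.Walk a b, ∃ v ∈ S, v ∈ p.support

/-- `S` is a minimal separator of `a` and `b` in `G`. -/
def SimpleGraph.IsMinSep {V : Type*} (G : SimpleGraph V) (a b : V) (S : Set V) : Prop :=
  G.IsSep a b S ∧ ∀ T ⊂ S, ¬ G.IsSep a b T

/-- minimum cardinality of a minimal separator of `a` and `b`. -/
noncomputable def SimpleGraph.pairSepOrder {V : Type*} (G : SimpleGraph V) (a b : V) : ℕ :=
  sInf {n | ∃ S : Set V, G.IsMinSep a b S ∧ S.ncard = n}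

/-- separability order: max over non-adjacent pairs of the minimum size of a minimal separator. -/
noncomputable def SimpleGraph.sepOrder {V : Type*} (G : SimpleGraph V) : ℕ :=
  sSup {n | ∃ a b : V, a ≠ b ∧ ¬ G.Adj a b ∧ n = G.pairSepOrder a b}

/-- maximum degree (via `Set.ncard` of neighborhoods). -/
noncomputable def SimpleGraph.maxDeg {V : Type*} (G : SimpleGraph V) : ℕ :=
  sSup {n | ∃ v : V, n = (G.neighborSet v).ncard}

/-- degree two of a vertex: number of neighbors having degree at least 2. -/
noncomputable def SimpleGraph.deg2 {V : Type*} (G : SimpleGraph V) (a : V) : ℕ :=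
  {γ : V | G.Adj a γ ∧ 2 ≤ (G.neighborSet γ).ncard}.ncard

/-- degree two of a graph. -/
noncomputable def SimpleGraph.maxDeg2 {V : Type*} (G : SimpleGraph V) : ℕ :=
  sSup {n | ∃ v : V, n = G.deg2 v}

/-- `S` separates the sets `A` and `B` in `G`: every walk from `A` to `B` meets `S`. -/
def SimpleGraph.SetSep {V : Type*} (G : SimpleGraph V) (A B S : Set V) : Prop :=
  ∀ a ∈ A, ∀ b ∈ B, ∀ p : G.Walk a b, ∃ v ∈ S, v ∈ p.support

/-- The conditional-independence relation `CI` is perfectly Markov w.r.t. `G`: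
for disjoint `A`, `B` nonempty and `S` nonempty, separation is equivalent to
conditional independence. -/
def PerfectMarkov {V : Type*} (G : SimpleGraph V) (CI : Set V → Set V → Set V → Prop) : Prop :=
  ∀ A B S : Set V, A.Nonempty → B.Nonempty → S.Nonempty →
    Disjoint A B → Disjoint A S → Disjoint B S →
    (G.SetSep A B S ↔ CI A B S)

/-- the `k`-graph `G_k`: `a ≁ b` iff `X_a ⟂⟂ X_b | X_S` for some `S ⊆ V \ {a,b}` with `|S| = k`. -/
def kGraph {V : Type*} (CI : Set V → Set V → Set V → Prop) (k : ℕ) : SimpleGraph V where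
  Adj a b := a ≠ b ∧
    ¬ ∃ S : Set V, a ∉ S ∧ b ∉ S ∧ S.ncard = k ∧ (CI {a} {b} S ∨ CI {b} {a} S)
  symm := ⟨fun a b => fun ⟨hne, h⟩ =>
    ⟨hne.symm, fun ⟨S, hb, ha, hc, hci⟩ => h ⟨S, ha, hb, hc, hci.symm⟩⟩⟩
  loopless := ⟨fun a => fun ⟨hne, _⟩ => hne rfl⟩

/-- the `k`-partial graph `G_k^p`: `a ≁ b` iff `X_a ⟂⟂ X_b | X_S` for some `S ⊆ V \ {a,b}`
with `|S| ≤ k`. -/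
def kpGraph {V : Type*} (CI : Set V → Set V → Set V → Prop) (k : ℕ) : SimpleGraph V where
  Adj a b := a ≠ b ∧
    ¬ ∃ S : Set V, a ∉ S ∧ b ∉ S ∧ S.ncard ≤ k ∧ (CI {a} {b} S ∨ CI {b} {a} S)
  symm := ⟨fun a b => fun ⟨hne, h⟩ =>
    ⟨hne.symm, fun ⟨S, hb, ha, hc, hci⟩ => h ⟨S, ha, hb, hc, hci.symm⟩⟩⟩
  loopless := ⟨fun a => fun ⟨hne, _⟩ => hne rfl⟩

section
variable {V : Type*} [Fintype V] (G : SimpleGraph V)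

omit [Fintype V] in
lemma exists_minsep_subset (a b : V) :
    ∀ n (S : Set V), S.Finite → S.ncard = n → G.IsSep a b S → ∃ T ⊆ S, G.IsMinSep a b T := by
  intro n
  induction n using Nat.strong_induction_on with
  | _ n ih =>
    intro S hfin hcard hS
    by_cases hmin : ∀ T ⊂ S, ¬ G.IsSep a b T
    · exact ⟨S, subset_rfl, hS, hmin⟩
    · push_neg at hmin
      obtain ⟨T, hTS, hT⟩ := hmin
      have hlt : T.ncard < n := hcard ▸ Set.ncard_lt_ncard hTS hfin
      obtain ⟨T', hT'T, hT'⟩ := ih T.ncard hlt T (hfin.subset hTS.subset) rfl hT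
      exact ⟨T', hT'T.trans hTS.subset, hT'⟩

omit [Fintype V] in
lemma compl_isSep (a b : V) (hne : a ≠ b) (hnadj : ¬ G.Adj a b) :
    G.IsSep a b {a, b}ᶜ := by
  refine ⟨by simp, by simp, ?_⟩
  intro p
  cases p with
  | nil => exact absurd rfl hne
  | cons h q =>
    rename_i x
    refine ⟨x, ?_, by simp [SimpleGraph.Walk.support_cons]⟩
    simp only [Set.mem_compl_iff, Set.mem_insert_iff, Set.mem_singleton_iff]
    rintro (rfl | rfl)
    · exact G.loopless.irrefl _ h
    · exact hnadj h

lemma exists_minsep (a b : V) (hne : a ≠ b) (hnadj : ¬ G.Adj a b) :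
    ∃ T, G.IsMinSep a b T := by
  obtain ⟨T, _, hT⟩ :=
    exists_minsep_subset G a b _ _ (Set.toFinite _) rfl (compl_isSep G a b hne hnadj)
  exact ⟨T, hT⟩

lemma pairSepOrder_le_card (a b : V) : G.pairSepOrder a b ≤ Fintype.card V := by
  by_cases h : {n | ∃ S : Set V, G.IsMinSep a b S ∧ S.ncard = n}.Nonempty
  · obtain ⟨S, _, hS⟩ := Nat.sInf_mem h
    rw [SimpleGraph.pairSepOrder, ← hS]
    calc S.ncard ≤ (Set.univ : Set V).ncard :=
          Set.ncard_le_ncard (Set.subset_univ S) Set.finite_univ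
      _ = Fintype.card V := by rw [Set.ncard_univ, Nat.card_eq_fintype_card]
  · rw [Set.not_nonempty_iff_eq_empty] at h
    simp [SimpleGraph.pairSepOrder, h]

end

/-- If `G` is connected non-complete with `so(G) = m > 0` and `P` (encoded by the
conditional independence relation `CI`) is perfectly Markov to `G`, then the
`m`-graph `G_m` equals `G`. -/

theorem stmt11 {V : Type*} [Fintype V] (G : SimpleGraph V)
    (CI : Set V → Set V → Set V → Prop) (hpm : PerfectMarkov G CI)
    (hconn : G.Connected) (hnc : ∃ a b : V, a ≠ b ∧ ¬ G.Adj a b)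
    (m : ℕ) (hso : G.sepOrder = m) (hpos : 0 < m) :
    kGraph CI m = G := by
  classical
  have hbdd : BddAbove {n | ∃ a b : V, a ≠ b ∧ ¬ G.Adj a b ∧ n = G.pairSepOrder a b} :=
    ⟨Fintype.card V, by rintro n ⟨a, b, -, -, rfl⟩; exact pairSepOrder_le_card G a b⟩
  have hKne : {n | ∃ a b : V, a ≠ b ∧ ¬ G.Adj a b ∧ n = G.pairSepOrder a b}.Nonempty := by
    obtain ⟨a, b, hne, hnadj⟩ := hnc
    exact ⟨_, a, b, hne, hnadj, rfl⟩
  have hmK : m ∈ {n | ∃ a b : V, a ≠ b ∧ ¬ G.Adj a b ∧ n = G.pairSepOrder a b} := by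
    rw [← hso]; exact Nat.sSup_mem hKne hbdd
  obtain ⟨a', b', hne', hnadj', hm'⟩ := hmK
  rw [SimpleGraph.pairSepOrder] at hm'
  have hcardV : m + 2 ≤ Fintype.card V := by
    have hne2 : {n | ∃ S : Set V, G.IsMinSep a' b' S ∧ S.ncard = n}.Nonempty := by
      obtain ⟨T, hT⟩ := exists_minsep G a' b' hne' hnadj'
      exact ⟨T.ncard, T, hT, rfl⟩
    obtain ⟨S', hS'min, hS'card⟩ := Nat.sInf_mem hne2
    have ha' : a' ∉ S' := hS'min.1.1
    have hb' : b' ∉ S' := hS'min.1.2.1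
    have hSm : S'.ncard = m := by rw [hS'card, ← hm']
    have h2 : (insert a' (insert b' S')).ncard = m + 2 := by
      rw [Set.ncard_insert_of_notMem (by simp [ha', hne']) (Set.toFinite _),
        Set.ncard_insert_of_notMem hb' (Set.toFinite _), hSm]
    calc m + 2 = (insert a' (insert b' S')).ncard := h2.symm
      _ ≤ (Set.univ : Set V).ncard :=
          Set.ncard_le_ncard (Set.subset_univ _) Set.finite_univ
      _ = Fintype.card V := by rw [Set.ncard_univ, Nat.card_eq_fintype_card]
  ext a b
  show (a ≠ b ∧
      ¬ ∃ S : Set V, a ∉ S ∧ b ∉ S ∧ S.ncard = m ∧ (CI {a} {b} S ∨ CI {b} {a} S)) ↔ G.Adj a b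
  constructor
  · rintro ⟨hne, h⟩
    by_contra hnadj
    have hne2 : {n | ∃ S : Set V, G.IsMinSep a b S ∧ S.ncard = n}.Nonempty := by
      obtain ⟨T, hT⟩ := exists_minsep G a b hne hnadj
      exact ⟨T.ncard, T, hT, rfl⟩
    obtain ⟨S0, hS0min, hS0card⟩ := Nat.sInf_mem hne2
    have hS0m : S0.ncard ≤ m := by
      rw [hS0card]
      rw [← hso]
      exact le_csSup hbdd ⟨a, b, hne, hnadj, rfl⟩
    have hsub : S0 ⊆ ({a, b}ᶜ : Set V) := by
      intro x hx
      simp only [Set.mem_compl_iff, Set.mem_insert_iff, Set.mem_singleton_iff]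
      rintro (rfl | rfl)
      exacts [hS0min.1.1 hx, hS0min.1.2.1 hx]
    have hcompl : m ≤ ({a, b}ᶜ : Set V).ncard := by
      have hadd := Set.ncard_add_ncard_compl ({a, b} : Set V)
      rw [Set.ncard_pair hne, Nat.card_eq_fintype_card] at hadd
      omega
    obtain ⟨S, hS0S, hSsub, hScard⟩ := Set.exists_superset_subset_encard_eq hsub
      (show S0.encard ≤ (m : ℕ∞) by
        rw [← Set.Finite.cast_ncard_eq (Set.toFinite S0)]; exact_mod_cast hS0m)
      (show (m : ℕ∞) ≤ ({a, b}ᶜ : Set V).encard by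
        rw [← Set.Finite.cast_ncard_eq (Set.toFinite _)]; exact_mod_cast hcompl)
    have hSncard : S.ncard = m := by
      rw [Set.ncard_def, hScard]; simp
    have haS : a ∉ S := fun hx => by simpa using hSsub hx
    have hbS : b ∉ S := fun hx => by simpa using hSsub hx
    have hSne : S.Nonempty := Set.nonempty_of_ncard_ne_zero (by omega)
    have hsep : G.SetSep {a} {b} S := by
      intro x hx y hy p
      rw [Set.mem_singleton_iff] at hx hy
      subst hx; subst hy
      obtain ⟨v, hv, hvs⟩ := hS0min.1.2.2 p
      exact ⟨v, hS0S hv, hvs⟩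
    have hci : CI {a} {b} S :=
      (hpm {a} {b} S (Set.singleton_nonempty a) (Set.singleton_nonempty b) hSne
        (Set.disjoint_singleton.mpr hne) (Set.disjoint_singleton_left.mpr haS)
        (Set.disjoint_singleton_left.mpr hbS)).mp hsep
    exact h ⟨S, haS, hbS, hSncard, Or.inl hci⟩
  · intro hadj
    refine ⟨hadj.ne, ?_⟩
    rintro ⟨S, haS, hbS, hScard, hci⟩
    have hSne : S.Nonempty := Set.nonempty_of_ncard_ne_zero (by omega)
    have hne := hadj.ne
    cases hci with
    | inl hc =>
      have hsep : G.SetSep {a} {b} S :=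
        (hpm {a} {b} S (Set.singleton_nonempty a) (Set.singleton_nonempty b) hSne
          (Set.disjoint_singleton.mpr hne) (Set.disjoint_singleton_left.mpr haS)
          (Set.disjoint_singleton_left.mpr hbS)).mpr hc
      obtain ⟨v, hvS, hvsup⟩ := hsep a rfl b rfl (SimpleGraph.Walk.cons hadj SimpleGraph.Walk.nil)
      simp only [SimpleGraph.Walk.support_cons, SimpleGraph.Walk.support_nil,
        List.mem_cons, List.mem_singleton, List.not_mem_nil, or_false] at hvsup
      rcases hvsup with rfl | rfl
      exacts [haS hvS, hbS hvS]
    | inr hc =>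
      have hsep : G.SetSep {b} {a} S :=
        (hpm {b} {a} S (Set.singleton_nonempty b) (Set.singleton_nonempty a) hSne
          (Set.disjoint_singleton.mpr hne.symm) (Set.disjoint_singleton_left.mpr hbS)
          (Set.disjoint_singleton_left.mpr haS)).mpr hc
      obtain ⟨v, hvS, hvsup⟩ :=
        hsep b rfl a rfl (SimpleGraph.Walk.cons hadj.symm SimpleGraph.Walk.nil)
      simp only [SimpleGraph.Walk.support_cons, SimpleGraph.Walk.support_nil,
        List.mem_cons, List.mem_singleton, List.not_mem_nil, or_false] at hvsup
      rcases hvsup with rfl | rfl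
      exacts [hbS hvS, haS hvS]
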